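/- For a > 0 define v_a : ℝ → ℝ by v_a(x) = 2·arctan(x/a). Let n ≥ 1, let K ≥ 1 and L ≥ 1 be natural numbers, and let a_1,…,a_K > 0 and b_1,…,b_L > 0. Then there exists a unique ξ = (ξ_1,…,ξ_n) ∈ ℝ^n satisfying, for every j ∈ {1,…,n}, the system Σ_{k=1}^K v_{a_k}(ξ_j) + Σ_{j′≠j} Σ_{l=1}^L v_{b_l}(ξ_j − ξ_{j′}) = π(n+1−2j). Moreover this solution satisfies ξ_j − ξ_{j′} ≥ 2π(j′−j)/κ₋ for all 1 ≤ j < j′ ≤ n, where κ₋ = 2 Σ_{k=1}^K a_k^{−1} + 2n Σ_{l=1}^L b_l^{−1}. -/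

import Mathlib

open Real Finset

/-- The rational function `v_a(x) = 2 arctan(x/a)`. -/
noncomputable def vRat (a x : ℝ) : ℝ := 2 * Real.arctan (x / a)

/-- The rational type A Bethe critical-point system at `α = 0`, `β = β_n`, `μ = ρ̃`. -/
def ratASys (n K L : ℕ) (a : Fin K → ℝ) (b : Fin L → ℝ) (ξ : Fin n → ℝ) : Prop :=
  ∀ j : Fin n,
    (∑ k, vRat (a k) (ξ j)) +
    (∑ j' ∈ Finset.univ.erase j, ∑ l, vRat (b l) (ξ j - ξ j'))
    = π * ((n : ℝ) - 1 - 2 * j.val)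


lemma vRat_zero (a : ℝ) : vRat a 0 = 0 := by simp [vRat]

lemma vRat_neg (a x : ℝ) : vRat a (-x) = - vRat a x := by
  simp [vRat, neg_div]

lemma vRat_mono (a : ℝ) (ha : 0 < a) : Monotone (vRat a) := by
  intro x y hxy
  unfold vRat
  gcongr

lemma vRat_strictMono (a : ℝ) (ha : 0 < a) : StrictMono (vRat a) := by
  intro x y hxy
  exact mul_lt_mul_of_pos_left
    (Real.arctan_strictMono (div_lt_div_of_pos_right hxy ha)) two_pos

-- the difference of equations j and j'
lemma ratASys_sub {n K L : ℕ} {a : Fin K → ℝ} {b : Fin L → ℝ} {ξ : Fin n → ℝ}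
    (hξ : ratASys n K L a b ξ) {j j' : Fin n} (hne : j' ≠ j) :
    (∑ k, (vRat (a k) (ξ j) - vRat (a k) (ξ j'))) + 2 * ∑ l, vRat (b l) (ξ j - ξ j')
      + ∑ m ∈ (Finset.univ.erase j).erase j',
          ∑ l, (vRat (b l) (ξ j - ξ m) - vRat (b l) (ξ j' - ξ m))
     = 2 * π * ((j'.val : ℝ) - j.val) := by
  have E := hξ j
  have E' := hξ j'
  have hmem : j' ∈ Finset.univ.erase j := Finset.mem_erase.2 ⟨hne, Finset.mem_univ _⟩
  have hmem' : j ∈ Finset.univ.erase j' := Finset.mem_erase.2 ⟨fun h => hne h.symm, Finset.mem_univ _⟩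
  rw [← Finset.insert_erase hmem, Finset.sum_insert (Finset.notMem_erase _ _)] at E
  rw [← Finset.insert_erase hmem', Finset.sum_insert (Finset.notMem_erase _ _)] at E'
  rw [Finset.erase_right_comm] at E'
  have hneg : ∑ l, vRat (b l) (ξ j' - ξ j) = - ∑ l, vRat (b l) (ξ j - ξ j') := by
    rw [← Finset.sum_neg_distrib]
    refine Finset.sum_congr rfl fun l _ => ?_
    rw [← vRat_neg, neg_sub]
  rw [hneg] at E'
  rw [Finset.sum_sub_distrib]
  have hpair : ∑ m ∈ (Finset.univ.erase j).erase j',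
      ∑ l, (vRat (b l) (ξ j - ξ m) - vRat (b l) (ξ j' - ξ m))
      = (∑ m ∈ (Finset.univ.erase j).erase j', ∑ l, vRat (b l) (ξ j - ξ m))
        - ∑ m ∈ (Finset.univ.erase j).erase j', ∑ l, vRat (b l) (ξ j' - ξ m) := by
    rw [← Finset.sum_sub_distrib]
    exact Finset.sum_congr rfl fun m _ => by rw [Finset.sum_sub_distrib]
  rw [hpair]
  have : ((j'.val : ℝ)) ≠ (j.val : ℝ) ∨ True := Or.inr trivial
  linarith [E, E']

lemma hasDerivAt_vRat (a : ℝ) (ha : a ≠ 0) (x : ℝ) :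
    HasDerivAt (vRat a) (2 / a * (1 / (1 + (x / a) ^ 2))) x := by
  have h1 : HasDerivAt (fun x : ℝ => x / a) (1 / a) x := (hasDerivAt_id x).div_const a
  have h2 := (Real.hasDerivAt_arctan (x / a)).comp x h1
  have h3 := h2.const_mul (2 : ℝ)
  exact h3.congr_deriv (by ring)

lemma vRat_lipschitz (a : ℝ) (ha : 0 < a) {x y : ℝ} (hxy : x ≤ y) :
    vRat a y - vRat a x ≤ 2 / a * (y - x) := by
  have hdiff : Differentiable ℝ (vRat a) := fun x => (hasDerivAt_vRat a ha.ne' x).differentiableAt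
  refine image_sub_le_mul_sub_of_deriv_le hdiff (fun z => ?_) hxy
  rw [(hasDerivAt_vRat a ha.ne' z).deriv]
  have h1 : 0 < 1 + (z / a) ^ 2 := by positivity
  have h2 : 1 / (1 + (z / a) ^ 2) ≤ 1 := by
    rw [div_le_one h1]; nlinarith [sq_nonneg (z/a)]
  have h3 : 0 < 2 / a := by positivity
  nlinarith

lemma sum_twoDiv_mul {ι : Type*} [Fintype ι] (f : ι → ℝ) (c : ℝ) :
    ∑ i, 2 / f i * c = 2 * (∑ i, (f i)⁻¹) * c := by
  rw [Finset.mul_sum, Finset.sum_mul]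
  exact Finset.sum_congr rfl fun i _ => by ring

lemma ratASys_gap {n K L : ℕ} (hK : 1 ≤ K) {a : Fin K → ℝ} {b : Fin L → ℝ}
    (ha : ∀ k, 0 < a k) (hb : ∀ l, 0 < b l) {κ : ℝ}
    (hκ : κ = 2 * (∑ k, (a k)⁻¹) + 2 * (n : ℝ) * (∑ l, (b l)⁻¹))
    {ξ : Fin n → ℝ} (hξ : ratASys n K L a b ξ) {j j' : Fin n} (hjj' : j < j') :
    2 * π * ((j'.val : ℝ) - j.val) / κ ≤ ξ j - ξ j' := by
  have hFinK : Nonempty (Fin K) := Fin.pos_iff_nonempty.mp hK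
  have key := ratASys_sub hξ (a := a) (b := b) (ne_of_gt hjj')
  set S := (Finset.univ.erase j).erase j' with hS
  set t := ξ j - ξ j' with ht
  set A := ∑ k, (a k)⁻¹ with hA
  set B := ∑ l, (b l)⁻¹ with hB
  have hApos : 0 < A := Finset.sum_pos (fun k _ => inv_pos.2 (ha k)) Finset.univ_nonempty
  have hBpos : 0 ≤ B := Finset.sum_nonneg fun l _ => (inv_pos.2 (hb l)).le
  have hn0 : (0:ℝ) ≤ (n:ℝ) := Nat.cast_nonneg n
  have hκpos : 0 < κ := by rw [hκ]; positivity
  have hjlt : (j.val : ℝ) < j'.val := by exact_mod_cast hjj'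
  have hRHS : 0 < 2 * π * ((j'.val : ℝ) - j.val) := by
    have := pi_pos; nlinarith
  have htpos : 0 < t := by
    by_contra h
    push_neg at h
    have hle : ξ j ≤ ξ j' := by linarith
    have h1 : ∑ k, (vRat (a k) (ξ j) - vRat (a k) (ξ j')) ≤ 0 :=
      Finset.sum_nonpos fun k _ => sub_nonpos.2 (vRat_mono _ (ha k) hle)
    have h2 : ∑ l, vRat (b l) t ≤ 0 := Finset.sum_nonpos fun l _ => by
      have := vRat_mono _ (hb l) h
      rwa [vRat_zero] at this
    have h3 : ∑ m ∈ S, ∑ l, (vRat (b l) (ξ j - ξ m) - vRat (b l) (ξ j' - ξ m)) ≤ 0 :=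
      Finset.sum_nonpos fun m _ => Finset.sum_nonpos fun l _ =>
        sub_nonpos.2 (vRat_mono _ (hb l) (by linarith))
    linarith
  -- Lipschitz bounds
  have L1 : ∑ k, (vRat (a k) (ξ j) - vRat (a k) (ξ j')) ≤ 2 * A * t := by
    have := Finset.sum_le_sum (s := Finset.univ)
      (fun (k : Fin K) _ => vRat_lipschitz (a k) (ha k) (x := ξ j') (y := ξ j) (by linarith))
    calc ∑ k, (vRat (a k) (ξ j) - vRat (a k) (ξ j')) ≤ ∑ k, 2 / (a k) * (ξ j - ξ j') := this
      _ = 2 * A * t := by rw [hA]; exact sum_twoDiv_mul a t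
  have L2 : ∑ l, vRat (b l) t ≤ 2 * B * t := by
    have : ∀ l : Fin L, vRat (b l) t ≤ 2 / (b l) * t := by
      intro l
      have := vRat_lipschitz (b l) (hb l) (x := 0) (y := t) htpos.le
      rwa [vRat_zero, sub_zero, sub_zero] at this
    calc ∑ l, vRat (b l) t ≤ ∑ l, 2 / (b l) * t := Finset.sum_le_sum fun l _ => this l
      _ = 2 * B * t := by rw [hB]; exact sum_twoDiv_mul b t
  have hn2 : 2 ≤ n := by
    have := j'.isLt
    omega
  have hcard : (S.card : ℝ) = (n : ℝ) - 2 := by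
    have hmem : j' ∈ Finset.univ.erase j := Finset.mem_erase.2 ⟨ne_of_gt hjj', Finset.mem_univ _⟩
    rw [hS, Finset.card_erase_of_mem hmem, Finset.card_erase_of_mem (Finset.mem_univ j),
      Finset.card_univ, Fintype.card_fin]
    have : n - 1 - 1 = n - 2 := by omega
    rw [this, Nat.cast_sub hn2]
    norm_num
  have L3 : ∑ m ∈ S, ∑ l, (vRat (b l) (ξ j - ξ m) - vRat (b l) (ξ j' - ξ m))
      ≤ ((n : ℝ) - 2) * (2 * B * t) := by
    have hstep : ∀ m ∈ S, ∑ l, (vRat (b l) (ξ j - ξ m) - vRat (b l) (ξ j' - ξ m)) ≤ 2 * B * t := by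
      intro m _
      have : ∀ l : Fin L, vRat (b l) (ξ j - ξ m) - vRat (b l) (ξ j' - ξ m) ≤ 2 / (b l) * t := by
        intro l
        have := vRat_lipschitz (b l) (hb l) (x := ξ j' - ξ m) (y := ξ j - ξ m) (by linarith)
        calc vRat (b l) (ξ j - ξ m) - vRat (b l) (ξ j' - ξ m)
            ≤ 2 / (b l) * ((ξ j - ξ m) - (ξ j' - ξ m)) := this
          _ = 2 / (b l) * t := by rw [ht]; ring
      calc ∑ l, (vRat (b l) (ξ j - ξ m) - vRat (b l) (ξ j' - ξ m)) ≤ ∑ l, 2 / (b l) * t :=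
            Finset.sum_le_sum fun l _ => this l
        _ = 2 * B * t := by rw [hB]; exact sum_twoDiv_mul b t
    calc ∑ m ∈ S, ∑ l, (vRat (b l) (ξ j - ξ m) - vRat (b l) (ξ j' - ξ m))
        ≤ S.card • (2 * B * t) := Finset.sum_le_card_nsmul S _ _ hstep
      _ = (S.card : ℝ) * (2 * B * t) := nsmul_eq_mul _ _
      _ = ((n : ℝ) - 2) * (2 * B * t) := by rw [hcard]
  rw [div_le_iff₀ hκpos]
  have hBt : 0 ≤ 2 * B * t := by positivity
  nlinarith [key, L1, L2, L3]

lemma ratASys_le {n K L : ℕ} (hK : 1 ≤ K) {a : Fin K → ℝ} {b : Fin L → ℝ}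
    (ha : ∀ k, 0 < a k) (hb : ∀ l, 0 < b l)
    {ξ η : Fin n → ℝ} (hξ : ratASys n K L a b ξ) (hη : ratASys n K L a b η) :
    ∀ i, ξ i ≤ η i := by
  intro i
  have hFinK : Nonempty (Fin K) := Fin.pos_iff_nonempty.mp hK
  obtain ⟨j, -, hj⟩ := Finset.exists_max_image Finset.univ (fun i => ξ i - η i)
    ⟨i, Finset.mem_univ i⟩
  have hji := hj i (Finset.mem_univ i)
  suffices hle : ξ j ≤ η j by linarith
  by_contra hgt
  push_neg at hgt
  have E := hξ j
  have E' := hη j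
  have h1 : 0 < ∑ k, (vRat (a k) (ξ j) - vRat (a k) (η j)) :=
    Finset.sum_pos (fun k _ => sub_pos.2 (vRat_strictMono _ (ha k) hgt)) Finset.univ_nonempty
  have h2 : 0 ≤ ∑ m ∈ Finset.univ.erase j,
      ∑ l, (vRat (b l) (ξ j - ξ m) - vRat (b l) (η j - η m)) := by
    refine Finset.sum_nonneg fun m _ => Finset.sum_nonneg fun l _ => sub_nonneg.2 ?_
    have := hj m (Finset.mem_univ m)
    exact vRat_mono _ (hb l) (by linarith)
  have hsplit : ∑ k, (vRat (a k) (ξ j) - vRat (a k) (η j))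
      + ∑ m ∈ Finset.univ.erase j, ∑ l, (vRat (b l) (ξ j - ξ m) - vRat (b l) (η j - η m)) = 0 := by
    rw [Finset.sum_sub_distrib]
    have : ∑ m ∈ Finset.univ.erase j, ∑ l, (vRat (b l) (ξ j - ξ m) - vRat (b l) (η j - η m))
        = (∑ m ∈ Finset.univ.erase j, ∑ l, vRat (b l) (ξ j - ξ m))
          - ∑ m ∈ Finset.univ.erase j, ∑ l, vRat (b l) (η j - η m) := by
      rw [← Finset.sum_sub_distrib]
      exact Finset.sum_congr rfl fun m _ => by rw [Finset.sum_sub_distrib]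
    rw [this]
    linarith
  linarith


noncomputable def WRat (a x : ℝ) : ℝ :=
  2 * x * Real.arctan (x / a) - a * Real.log (1 + (x / a) ^ 2)

lemma WRat_zero (a : ℝ) : WRat a 0 = 0 := by simp [WRat]

lemma WRat_even (a x : ℝ) : WRat a (-x) = WRat a x := by
  simp only [WRat, neg_div, Real.arctan_neg, neg_neg, neg_sq]
  ring

lemma hasDerivAt_WRat (a : ℝ) (ha : 0 < a) (x : ℝ) :
    HasDerivAt (WRat a) (vRat a x) x := by
  have hu : HasDerivAt (fun x : ℝ => x / a) (1 / a) x := (hasDerivAt_id x).div_const a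
  have h1 : HasDerivAt (fun x : ℝ => 2 * x * Real.arctan (x / a))
      (2 * Real.arctan (x / a) + 2 * x * (1 / (1 + (x / a) ^ 2) * (1 / a))) x := by
    have ha1 : HasDerivAt (fun x : ℝ => 2 * x) 2 x := by
      simpa using (hasDerivAt_id x).const_mul 2
    have ha2 : HasDerivAt (fun x : ℝ => Real.arctan (x / a))
        (1 / (1 + (x / a) ^ 2) * (1 / a)) x := by
        have := (Real.hasDerivAt_arctan (x / a)).comp x hu; exact this
    have := ha1.mul ha2
    exact this.congr_deriv (by ring)
  have hpos : 0 < 1 + (x / a) ^ 2 := by positivity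
  have h2 : HasDerivAt (fun x : ℝ => a * Real.log (1 + (x / a) ^ 2))
      (a * (2 * (x / a) * (1 / a) / (1 + (x / a) ^ 2))) x := by
    have hu2 : HasDerivAt (fun x : ℝ => 1 + (x / a) ^ 2) (2 * (x / a) * (1 / a)) x := by
      have := (hu.pow 2).const_add 1
      exact this.congr_deriv (by ring)
    have := (Real.hasDerivAt_log hpos.ne').comp x hu2
    have h3 := this.const_mul a
    exact h3.congr_deriv (by field_simp)
  have := h1.sub h2
  refine this.congr_deriv ?_
  unfold vRat
  field_simp
  ring

lemma continuous_WRat (a : ℝ) (ha : 0 < a) : Continuous (WRat a) := by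
  exact Differentiable.continuous (fun x => (hasDerivAt_WRat a ha x).differentiableAt)

lemma WRat_nonneg (a : ℝ) (ha : 0 < a) (x : ℝ) : 0 ≤ WRat a x := by
  have main : ∀ y : ℝ, 0 ≤ y → 0 ≤ WRat a y := by
    intro y hy
    have := (convex_Ici (0:ℝ)).mul_sub_le_image_sub_of_le_deriv (C := 0)
      ((continuous_WRat a ha).continuousOn)
      (fun z _ => (hasDerivAt_WRat a ha z).differentiableAt.differentiableWithinAt)
      (fun z hz => by
        rw [(hasDerivAt_WRat a ha z).deriv]
        have hz0 : (0:ℝ) ≤ z := le_of_lt (by simpa [interior_Ici] using hz)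
        have := vRat_mono a ha hz0
        rwa [vRat_zero] at this)
      0 Set.self_mem_Ici y hy hy
    rw [WRat_zero] at this
    simpa using this
  rcases le_or_gt 0 x with hx | hx
  · exact main x hx
  · rw [← WRat_even]; exact main (-x) (by linarith)

lemma arctan_le_self {x : ℝ} (hx : 0 ≤ x) : Real.arctan x ≤ x := by
  have := image_sub_le_mul_sub_of_deriv_le Real.differentiable_arctan
    (C := 1) (fun z => by
      rw [Real.deriv_arctan]
      have : (0:ℝ) < 1 + z ^ 2 := by positivity
      rw [div_le_one this]; nlinarith [sq_nonneg z]) hx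
  simpa using this

lemma vRat_ge (a : ℝ) (ha : 0 < a) {z : ℝ} (hz : 0 < z) : π - 2 * a / z ≤ vRat a z := by
  have hza : 0 < z / a := by positivity
  have h1 : Real.arctan ((z/a)⁻¹) = π / 2 - Real.arctan (z / a) :=
    Real.arctan_inv_of_pos hza
  have h2 : Real.arctan ((z/a)⁻¹) ≤ (z/a)⁻¹ := arctan_le_self (by positivity)
  have h3 : (z/a)⁻¹ = a / z := by field_simp
  unfold vRat
  rw [h1, h3] at h2
  have h4 : 2 * a / z = 2 * (a / z) := by ring
  rw [h4]
  linarith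

/-- Linear lower bound for `WRat` with adjustable slope loss. -/
lemma WRat_ge (a : ℝ) (ha : 0 < a) {ε : ℝ} (hε : 0 < ε) (hεπ : ε ≤ π) (x : ℝ) :
    (π - ε) * |x| - 2 * π * a / ε ≤ WRat a x := by
  have hx0 : (0:ℝ) < 2 * a / ε := by positivity
  have main : ∀ y : ℝ, 0 ≤ y → (π - ε) * y - 2 * π * a / ε ≤ WRat a y := by
    intro y hy
    set x₀ : ℝ := 2 * a / ε with hx₀
    rcases le_or_gt y x₀ with h | h
    · have h1 : 0 ≤ WRat a y := WRat_nonneg a ha y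
      have h2 : (π - ε) * y ≤ π * x₀ := by
        have : (π - ε) * y ≤ π * y := by nlinarith [pi_pos]
        nlinarith [pi_pos]
      have h3 : π * x₀ = 2 * π * a / ε := by rw [hx₀]; field_simp
      linarith
    · have key := (convex_Ici x₀).mul_sub_le_image_sub_of_le_deriv (C := π - ε)
        ((continuous_WRat a ha).continuousOn)
        (fun z _ => (hasDerivAt_WRat a ha z).differentiableAt.differentiableWithinAt)
        (fun z hz => by
          rw [(hasDerivAt_WRat a ha z).deriv]
          have hzx : x₀ < z := by simpa [interior_Ici] using hz
          have hz0 : 0 < z := lt_trans hx0 hzx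
          have h4 := vRat_ge a ha hz0
          have h5 : 2 * a / z ≤ ε := by
            rw [div_le_iff₀ hz0]
            rw [hx₀] at hzx
            calc 2 * a = ε * (2 * a / ε) := by field_simp
              _ ≤ ε * z := by nlinarith
          linarith)
        x₀ Set.self_mem_Ici y (le_of_lt h) (le_of_lt h)
      have h1 : 0 ≤ WRat a x₀ := WRat_nonneg a ha x₀
      have h3 : π * x₀ = 2 * π * a / ε := by rw [hx₀]; field_simp
      nlinarith [pi_pos, hx0.le, mul_nonneg hε.le hx0.le]
  rcases le_or_gt 0 x with hx | hx
  · rw [abs_of_nonneg hx]; exact main x hx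
  · rw [abs_of_neg hx, ← WRat_even]; exact main (-x) (by linarith)


noncomputable def VRat (n K L : ℕ) (a : Fin K → ℝ) (b : Fin L → ℝ) (ξ : Fin n → ℝ) : ℝ :=
  (∑ j, ∑ k, WRat (a k) (ξ j))
  + (1/2) * ∑ j, ∑ m ∈ Finset.univ.erase j, ∑ l, WRat (b l) (ξ j - ξ m)
  - π * ∑ j, ((n:ℝ) - 1 - 2 * (j.val : ℝ)) * ξ j

lemma hasDerivAt_pairTerm {n : ℕ} (bl : ℝ) (hbl : 0 < bl) (ξ : Fin n → ℝ)
    (j i m : Fin n) (him : m ≠ i) (τ : ℝ) :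
    HasDerivAt (fun t => WRat bl (Function.update ξ j t i - Function.update ξ j t m))
      ((if i = j then vRat bl (τ - ξ m) else 0)
        + (if m = j then -(vRat bl (ξ i - τ)) else 0)) τ := by
  rcases eq_or_ne i j with rfl | hi
  · have hfun : (fun t => WRat bl (Function.update ξ i t i - Function.update ξ i t m))
        = fun t => WRat bl (t - ξ m) := by
      funext t
      rw [Function.update_self, Function.update_of_ne him]
    rw [hfun, if_pos rfl, if_neg him]
    have h := (hasDerivAt_WRat bl hbl (τ - ξ m)).comp τ ((hasDerivAt_id τ).sub_const (ξ m))
    simp at h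
    rw [add_zero]
    exact h
  · rcases eq_or_ne m j with rfl | hm
    · have hfun : (fun t => WRat bl (Function.update ξ m t i - Function.update ξ m t m))
          = fun t => WRat bl (ξ i - t) := by
        funext t
        rw [Function.update_self, Function.update_of_ne hi]
      rw [hfun, if_neg hi, if_pos rfl]
      have hs : HasDerivAt (fun t : ℝ => ξ i - t) (-1) τ := by
        simpa using (hasDerivAt_id τ).const_sub (ξ i)
      have h := (hasDerivAt_WRat bl hbl (ξ i - τ)).comp τ hs
      simp at h
      rw [zero_add]
      exact h
    · have hfun : (fun t => WRat bl (Function.update ξ j t i - Function.update ξ j t m))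
          = fun _ => WRat bl (ξ i - ξ m) := by
        funext t
        rw [Function.update_of_ne hi, Function.update_of_ne hm]
      rw [hfun, if_neg hi, if_neg hm]
      simpa using hasDerivAt_const τ (WRat bl (ξ i - ξ m))

lemma hasDerivAt_VRat_update {n K L : ℕ} {a : Fin K → ℝ} {b : Fin L → ℝ}
    (ha : ∀ k, 0 < a k) (hb : ∀ l, 0 < b l) (ξ : Fin n → ℝ) (j : Fin n) (τ : ℝ) :
    HasDerivAt (fun t => VRat n K L a b (Function.update ξ j t))
      ((∑ k, vRat (a k) τ) + (∑ m ∈ Finset.univ.erase j, ∑ l, vRat (b l) (τ - ξ m))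
        - π * ((n:ℝ) - 1 - 2 * (j.val : ℝ))) τ := by
  -- T1
  have h1 : HasDerivAt (fun t => ∑ i, ∑ k, WRat (a k) (Function.update ξ j t i))
      (∑ k, vRat (a k) τ) τ := by
    have step : ∀ i : Fin n, i ∈ Finset.univ → HasDerivAt
        (fun t => ∑ k, WRat (a k) (Function.update ξ j t i))
        (if i = j then ∑ k, vRat (a k) τ else 0) τ := by
      intro i _
      rcases eq_or_ne i j with rfl | hi
      · rw [if_pos rfl]
        have hfun : (fun t => ∑ k, WRat (a k) (Function.update ξ i t i))
            = fun t => ∑ k, WRat (a k) t := by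
          funext t; simp [Function.update_self]
        rw [hfun]
        exact HasDerivAt.fun_sum fun k _ => hasDerivAt_WRat (a k) (ha k) τ
      · rw [if_neg hi]
        have hfun : (fun t => ∑ k, WRat (a k) (Function.update ξ j t i))
            = fun _ => ∑ k, WRat (a k) (ξ i) := by
          funext t; simp [Function.update_of_ne hi]
        rw [hfun]
        exact hasDerivAt_const τ _
    have h := HasDerivAt.fun_sum step
    simpa [Finset.sum_ite_eq' Finset.univ j] using h
  -- T2
  have h2 : HasDerivAt
      (fun t => ∑ i, ∑ m ∈ Finset.univ.erase i, ∑ l,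
        WRat (b l) (Function.update ξ j t i - Function.update ξ j t m))
      (2 * ∑ m ∈ Finset.univ.erase j, ∑ l, vRat (b l) (τ - ξ m)) τ := by
    have step := HasDerivAt.fun_sum (x := τ) (u := Finset.univ)
      (A := fun i t => ∑ m ∈ Finset.univ.erase i, ∑ l,
        WRat (b l) (Function.update ξ j t i - Function.update ξ j t m))
      (A' := fun i => ∑ m ∈ Finset.univ.erase i, ∑ l,
        ((if i = j then vRat (b l) (τ - ξ m) else 0)
          + (if m = j then -(vRat (b l) (ξ i - τ)) else 0)))
      (fun i _ => HasDerivAt.fun_sum fun m hm => HasDerivAt.fun_sum fun l _ =>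
        hasDerivAt_pairTerm (b l) (hb l) ξ j i m (Finset.mem_erase.1 hm).1 τ)
    refine step.congr_deriv (Eq.symm ?_)
    have split : ∀ i : Fin n, ∑ m ∈ Finset.univ.erase i, ∑ l : Fin L,
        ((if i = j then vRat (b l) (τ - ξ m) else 0)
          + (if m = j then -(vRat (b l) (ξ i - τ)) else 0))
        = (if i = j then ∑ m ∈ Finset.univ.erase j, ∑ l, vRat (b l) (τ - ξ m) else 0)
          + (if i = j then 0 else -∑ l, vRat (b l) (ξ i - τ)) := by
      intro i
      rcases eq_or_ne i j with rfl | hi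
      · rw [if_pos rfl, if_pos rfl, add_zero]
        refine Finset.sum_congr rfl fun m hm => Finset.sum_congr rfl fun l _ => ?_
        rw [if_pos rfl, if_neg (Finset.mem_erase.1 hm).1, add_zero]
      · rw [if_neg hi, if_neg hi, zero_add]
        have hstep : ∀ m ∈ Finset.univ.erase i, (∑ l : Fin L,
            ((if i = j then vRat (b l) (τ - ξ m) else 0)
              + (if m = j then -(vRat (b l) (ξ i - τ)) else 0)))
            = (if m = j then -∑ l, vRat (b l) (ξ i - τ) else 0) := by
          intro m _
          rcases eq_or_ne m j with rfl | hm
          · rw [if_pos rfl, ← Finset.sum_neg_distrib]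
            refine Finset.sum_congr rfl fun l _ => ?_
            rw [if_neg hi, if_pos rfl, zero_add]
          · rw [if_neg hm]
            refine Finset.sum_eq_zero fun l _ => ?_
            rw [if_neg hi, if_neg hm, add_zero]
        rw [Finset.sum_congr rfl hstep, Finset.sum_ite_eq' (Finset.univ.erase i) j]
        rw [if_pos (Finset.mem_erase.2 ⟨Ne.symm hi, Finset.mem_univ j⟩)]
    rw [Finset.sum_congr rfl fun i _ => split i, Finset.sum_add_distrib]
    rw [Finset.sum_ite_eq' Finset.univ j, if_pos (Finset.mem_univ j)]
    have h3 : ∑ i : Fin n, (if i = j then 0 else -∑ l, vRat (b l) (ξ i - τ))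
        = ∑ m ∈ Finset.univ.erase j, ∑ l, vRat (b l) (τ - ξ m) := by
      rw [← Finset.sum_erase_add Finset.univ _ (Finset.mem_univ j), if_pos rfl, add_zero]
      refine Finset.sum_congr rfl fun i hi => ?_
      rw [if_neg (Finset.mem_erase.1 hi).1, ← Finset.sum_neg_distrib]
      refine Finset.sum_congr rfl fun l _ => ?_
      rw [← vRat_neg, neg_sub]
    rw [h3]
    ring
  -- T3
  have h3 : HasDerivAt (fun t => ∑ i, ((n:ℝ) - 1 - 2 * (i.val : ℝ)) * Function.update ξ j t i)
      (((n:ℝ) - 1 - 2 * (j.val : ℝ))) τ := by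
    have step : ∀ i : Fin n, i ∈ Finset.univ → HasDerivAt
        (fun t => ((n:ℝ) - 1 - 2 * (i.val : ℝ)) * Function.update ξ j t i)
        (if i = j then ((n:ℝ) - 1 - 2 * (i.val : ℝ)) else 0) τ := by
      intro i _
      rcases eq_or_ne i j with rfl | hi
      · rw [if_pos rfl]
        have hfun : (fun t => ((n:ℝ) - 1 - 2 * (i.val : ℝ)) * Function.update ξ i t i)
            = fun t => ((n:ℝ) - 1 - 2 * (i.val : ℝ)) * t := by
          funext t; rw [Function.update_self]
        rw [hfun]
        simpa using (hasDerivAt_id τ).const_mul ((n:ℝ) - 1 - 2 * (i.val : ℝ))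
      · rw [if_neg hi]
        have hfun : (fun t => ((n:ℝ) - 1 - 2 * (i.val : ℝ)) * Function.update ξ j t i)
            = fun _ => ((n:ℝ) - 1 - 2 * (i.val : ℝ)) * ξ i := by
          funext t; rw [Function.update_of_ne hi]
        rw [hfun]
        exact hasDerivAt_const τ _
    have h := HasDerivAt.fun_sum step
    simpa [Finset.sum_ite_eq' Finset.univ j] using h
  have hV := (h1.add (h2.const_mul ((1:ℝ)/2))).sub ((h3.const_mul π))
  have hfun : (fun t => VRat n K L a b (Function.update ξ j t))
      = fun t => (∑ i, ∑ k, WRat (a k) (Function.update ξ j t i))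
        + (1/2) * (∑ i, ∑ m ∈ Finset.univ.erase i, ∑ l,
            WRat (b l) (Function.update ξ j t i - Function.update ξ j t m))
        - π * ∑ i, ((n:ℝ) - 1 - 2 * (i.val : ℝ)) * Function.update ξ j t i := by
    funext t; rfl
  rw [hfun]
  refine hV.congr_deriv ?_
  ring


lemma cast_sub_one {n : ℕ} (hn : 1 ≤ n) : ((n - 1 : ℕ) : ℝ) = (n : ℝ) - 1 := by
  push_cast [Nat.cast_sub hn]; ring

lemma sum_sgn_erase {n : ℕ} (j : Fin n) :
    ∑ m ∈ Finset.univ.erase j, (if j < m then (1:ℝ) else -1) = (n:ℝ) - 1 - 2 * j.val := by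
  rw [Finset.sum_ite]
  have h1 : Finset.filter (fun m => j < m) (Finset.univ.erase j) = Finset.Ioi j := by
    ext m
    simp only [Finset.mem_filter, Finset.mem_erase, Finset.mem_univ, true_and, and_true,
      Finset.mem_Ioi, Finset.mem_Iio, not_lt, ne_eq, Fin.lt_def, Fin.le_def, Fin.ext_iff]
    omega
  have h2 : Finset.filter (fun m => ¬ j < m) (Finset.univ.erase j) = Finset.Iio j := by
    ext m
    simp only [Finset.mem_filter, Finset.mem_erase, Finset.mem_univ, true_and, and_true,
      Finset.mem_Ioi, Finset.mem_Iio, not_lt, ne_eq, Fin.lt_def, Fin.le_def, Fin.ext_iff]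
    omega
  rw [h1, h2, Finset.sum_const, Finset.sum_const, Fin.card_Ioi, Fin.card_Iio]
  have hn1 : 1 ≤ n := j.pos
  have hj : j.val ≤ n - 1 := by omega
  rw [nsmul_eq_mul, nsmul_eq_mul, Nat.cast_sub hj, cast_sub_one hn1]
  ring

lemma sum_sgn_erase' {n : ℕ} (m : Fin n) :
    ∑ j ∈ Finset.univ.erase m, (if j < m then (1:ℝ) else -1) = -((n:ℝ) - 1 - 2 * m.val) := by
  rw [Finset.sum_ite]
  have h1 : Finset.filter (fun j => j < m) (Finset.univ.erase m) = Finset.Iio m := by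
    ext j
    simp only [Finset.mem_filter, Finset.mem_erase, Finset.mem_univ, true_and, and_true,
      Finset.mem_Ioi, Finset.mem_Iio, not_lt, ne_eq, Fin.lt_def, Fin.le_def, Fin.ext_iff]
    omega
  have h2 : Finset.filter (fun j => ¬ j < m) (Finset.univ.erase m) = Finset.Ioi m := by
    ext j
    simp only [Finset.mem_filter, Finset.mem_erase, Finset.mem_univ, true_and, and_true,
      Finset.mem_Ioi, Finset.mem_Iio, not_lt, ne_eq, Fin.lt_def, Fin.le_def, Fin.ext_iff]
    omega
  rw [h1, h2, Finset.sum_const, Finset.sum_const, Fin.card_Ioi, Fin.card_Iio]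
  have hn1 : 1 ≤ n := m.pos
  have hm : m.val ≤ n - 1 := by omega
  rw [nsmul_eq_mul, nsmul_eq_mul, Nat.cast_sub hm, cast_sub_one hn1]
  ring

lemma sum_sgn_mul {n : ℕ} (ξ : Fin n → ℝ) :
    2 * ∑ j, ((n:ℝ) - 1 - 2 * (j.val : ℝ)) * ξ j
      = ∑ j, ∑ m ∈ Finset.univ.erase j, (if j < m then (1:ℝ) else -1) * (ξ j - ξ m) := by
  have e1 : ∀ j : Fin n, ∑ m ∈ Finset.univ.erase j, (if j < m then (1:ℝ) else -1) * (ξ j - ξ m)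
      = (∑ m ∈ Finset.univ.erase j, (if j < m then (1:ℝ) else -1)) * ξ j
        - ∑ m ∈ Finset.univ.erase j, (if j < m then (1:ℝ) else -1) * ξ m := by
    intro j
    rw [Finset.sum_mul, ← Finset.sum_sub_distrib]
    exact Finset.sum_congr rfl fun m _ => by ring
  rw [Finset.sum_congr rfl fun j _ => e1 j, Finset.sum_sub_distrib]
  have e2 : ∑ j : Fin n, (∑ m ∈ Finset.univ.erase j, (if j < m then (1:ℝ) else -1)) * ξ j
      = ∑ j : Fin n, ((n:ℝ) - 1 - 2 * (j.val : ℝ)) * ξ j :=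
    Finset.sum_congr rfl fun j _ => by rw [sum_sgn_erase]
  have e3 : ∑ j : Fin n, ∑ m ∈ Finset.univ.erase j, (if j < m then (1:ℝ) else -1) * ξ m
      = ∑ m : Fin n, ∑ j ∈ Finset.univ.erase m, (if j < m then (1:ℝ) else -1) * ξ m := by
    refine Finset.sum_comm' fun x y => ?_
    simp only [Finset.mem_univ, true_and, and_true, Finset.mem_erase]
    exact ⟨fun h => h.symm, fun h => h.symm⟩
  have e4 : ∑ m : Fin n, ∑ j ∈ Finset.univ.erase m, (if j < m then (1:ℝ) else -1) * ξ m
      = ∑ m : Fin n, -(((n:ℝ) - 1 - 2 * (m.val : ℝ)) * ξ m) := by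
    refine Finset.sum_congr rfl fun m _ => ?_
    rw [← Finset.sum_mul, sum_sgn_erase']
    ring
  rw [e2, e3, e4, Finset.sum_neg_distrib]
  ring

noncomputable def CRat (n K L : ℕ) (a : Fin K → ℝ) (b : Fin L → ℝ) : ℝ :=
  (n:ℝ) * (4 * ∑ k, a k) + 4 * (n:ℝ)^3 * (∑ l, b l)

lemma VRat_coercive {n K L : ℕ} (hn : 1 ≤ n) (hK : 1 ≤ K) (hL : 1 ≤ L)
    {a : Fin K → ℝ} {b : Fin L → ℝ} (ha : ∀ k, 0 < a k) (hb : ∀ l, 0 < b l) (ξ : Fin n → ℝ) :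
    (π/4) * (∑ j, |ξ j|) - CRat n K L a b ≤ VRat n K L a b ξ := by
  have hπ := pi_pos
  set Sa := ∑ k, a k with hSa
  set Sb := ∑ l, b l with hSb
  have hSa0 : 0 ≤ Sa := Finset.sum_nonneg fun k _ => (ha k).le
  have hSb0 : 0 ≤ Sb := Finset.sum_nonneg fun l _ => (hb l).le
  have hn1 : (1:ℝ) ≤ (n:ℝ) := by exact_mod_cast hn
  set ε : ℝ := π / (4 * n) with hε
  have hε0 : 0 < ε := by positivity
  have hεπ : ε ≤ π := by
    rw [hε, div_le_iff₀ (by positivity)]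
    nlinarith
  have hεn : ε * (n:ℝ) = π / 4 := by
    rw [hε]; field_simp
  have hπε : π / ε = 4 * n := by
    rw [hε]; field_simp
  -- diagonal bound
  have B1 : ∀ j : Fin n, (π/2) * |ξ j| - 4 * Sa ≤ ∑ k, WRat (a k) (ξ j) := by
    intro j
    have each : ∀ k : Fin K, (π/2) * |ξ j| - 4 * (a k) ≤ WRat (a k) (ξ j) := by
      intro k
      have h := WRat_ge (a k) (ha k) (ε := π/2) (by positivity) (by linarith) (ξ j)
      have h1 : π - π/2 = π/2 := by ring
      have h2 : 2 * π * (a k) / (π/2) = 4 * a k := by field_simp; ring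
      rw [h1, h2] at h
      exact h
    calc (π/2) * |ξ j| - 4 * Sa
        ≤ ∑ k, ((π/2) * |ξ j| - 4 * (a k)) := by
          rw [Finset.sum_sub_distrib, Finset.sum_const, Finset.card_univ, Fintype.card_fin,
            ← Finset.mul_sum, ← hSa]
          have hKr : (1:ℝ) ≤ (K:ℝ) := by exact_mod_cast hK
          have habs : 0 ≤ |ξ j| := abs_nonneg _
          have hx : 0 ≤ (π/2) * |ξ j| := by positivity
          rw [nsmul_eq_mul]
          nlinarith [mul_nonneg (sub_nonneg.2 hKr) hx]
      _ ≤ ∑ k, WRat (a k) (ξ j) := Finset.sum_le_sum fun k _ => each k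
  -- pair bound
  have B2 : ∀ d : ℝ, (π - ε) * |d| - (2 * π / ε) * Sb ≤ ∑ l, WRat (b l) d := by
    intro d
    have each : ∀ l : Fin L, (π - ε) * |d| - 2 * π * (b l) / ε ≤ WRat (b l) d :=
      fun l => WRat_ge (b l) (hb l) hε0 hεπ d
    calc (π - ε) * |d| - (2 * π / ε) * Sb
        ≤ ∑ l, ((π - ε) * |d| - 2 * π * (b l) / ε) := by
          rw [Finset.sum_sub_distrib, Finset.sum_const, Finset.card_univ, Fintype.card_fin]
          have hLr : (1:ℝ) ≤ (L:ℝ) := by exact_mod_cast hL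
          have habs : 0 ≤ |d| := abs_nonneg _
          have h1 : ∑ l, 2 * π * (b l) / ε = (2 * π / ε) * Sb := by
            rw [hSb, Finset.mul_sum]
            exact Finset.sum_congr rfl fun l _ => by field_simp
          have hx : 0 ≤ (π - ε) * |d| := mul_nonneg (by linarith) habs
          rw [h1, nsmul_eq_mul]
          nlinarith [mul_nonneg (sub_nonneg.2 hLr) hx]
      _ ≤ ∑ l, WRat (b l) d := Finset.sum_le_sum fun l _ => each l
  set S1 := ∑ j, |ξ j| with hS1
  have hS10 : 0 ≤ S1 := Finset.sum_nonneg fun j _ => abs_nonneg _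
  set Scx := ∑ j, ((n:ℝ) - 1 - 2 * (j.val : ℝ)) * ξ j with hScx
  have T1 : (π/2) * S1 - (n:ℝ) * (4 * Sa) ≤ ∑ j, ∑ k, WRat (a k) (ξ j) := by
    calc (π/2) * S1 - (n:ℝ) * (4 * Sa) = ∑ j, ((π/2) * |ξ j| - 4 * Sa) := by
          rw [Finset.sum_sub_distrib, Finset.sum_const, Finset.card_univ, Fintype.card_fin,
            nsmul_eq_mul, hS1, Finset.mul_sum]
      _ ≤ ∑ j, ∑ k, WRat (a k) (ξ j) := Finset.sum_le_sum fun j _ => B1 j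
  have habs_ge : ∀ j m : Fin n, (if j < m then (1:ℝ) else -1) * (ξ j - ξ m) ≤ |ξ j - ξ m| := by
    intro j m
    split_ifs
    · rw [one_mul]; exact le_abs_self _
    · rw [neg_one_mul]; exact neg_le_abs _
  have T2 : (π - ε) * (2 * Scx) - (n:ℝ) * ((n:ℝ) - 1) * ((2*π/ε)*Sb)
      ≤ ∑ j, ∑ m ∈ Finset.univ.erase j, ∑ l, WRat (b l) (ξ j - ξ m) := by
    have hDabs : 2 * Scx ≤ ∑ j, ∑ m ∈ Finset.univ.erase j, |ξ j - ξ m| := by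
      rw [hScx, sum_sgn_mul ξ]
      exact Finset.sum_le_sum fun j _ => Finset.sum_le_sum fun m _ => habs_ge j m
    have hmul : (π - ε) * (2 * Scx) ≤ (π - ε) * ∑ j, ∑ m ∈ Finset.univ.erase j, |ξ j - ξ m| :=
      mul_le_mul_of_nonneg_left hDabs (by linarith)
    have hsum : ∑ j : Fin n, ∑ m ∈ Finset.univ.erase j, ((π - ε) * |ξ j - ξ m| - (2*π/ε)*Sb)
        = (π - ε) * (∑ j, ∑ m ∈ Finset.univ.erase j, |ξ j - ξ m|)
          - (n:ℝ) * (((n:ℝ) - 1) * ((2*π/ε)*Sb)) := by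
      have h1 : ∀ j : Fin n, ∑ m ∈ Finset.univ.erase j, ((π - ε) * |ξ j - ξ m| - (2*π/ε)*Sb)
          = (π - ε) * (∑ m ∈ Finset.univ.erase j, |ξ j - ξ m|) - ((n:ℝ) - 1) * ((2*π/ε)*Sb) := by
        intro j
        rw [Finset.sum_sub_distrib, Finset.sum_const, Finset.card_erase_of_mem (Finset.mem_univ j),
          Finset.card_univ, Fintype.card_fin, nsmul_eq_mul, cast_sub_one hn]
        congr 1
        rw [Finset.mul_sum]
      rw [Finset.sum_congr rfl fun j _ => h1 j, Finset.sum_sub_distrib, Finset.sum_const,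
        Finset.card_univ, Fintype.card_fin, nsmul_eq_mul]
      congr 1
      rw [Finset.mul_sum]
    calc (π - ε) * (2 * Scx) - (n:ℝ) * ((n:ℝ) - 1) * ((2*π/ε)*Sb)
        ≤ ∑ j : Fin n, ∑ m ∈ Finset.univ.erase j, ((π - ε) * |ξ j - ξ m| - (2*π/ε)*Sb) := by
          rw [hsum]; linarith
      _ ≤ ∑ j, ∑ m ∈ Finset.univ.erase j, ∑ l, WRat (b l) (ξ j - ξ m) :=
          Finset.sum_le_sum fun j _ => Finset.sum_le_sum fun m _ => B2 (ξ j - ξ m)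
  have hlin : |Scx| ≤ (n:ℝ) * S1 := by
    calc |Scx| ≤ ∑ j, |((n:ℝ) - 1 - 2 * (j.val : ℝ)) * ξ j| := by
          rw [hScx]; exact Finset.abs_sum_le_sum_abs _ _
      _ ≤ ∑ j, (n:ℝ) * |ξ j| := by
          refine Finset.sum_le_sum fun j _ => ?_
          rw [abs_mul]
          have hjn : (j.val : ℝ) ≤ (n:ℝ) - 1 := by
            have := j.isLt
            have : (j.val : ℝ) + 1 ≤ (n:ℝ) := by exact_mod_cast this
            linarith
          have h2 : (0:ℝ) ≤ (j.val : ℝ) := Nat.cast_nonneg _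
          have hc : |(n:ℝ) - 1 - 2 * (j.val : ℝ)| ≤ (n:ℝ) := by
            rw [abs_le]; constructor <;> linarith
          exact mul_le_mul_of_nonneg_right hc (abs_nonneg _)
      _ = (n:ℝ) * S1 := by rw [hS1, Finset.mul_sum]
  have e5 : ε * Scx ≤ (π/4) * S1 := by
    calc ε * Scx ≤ ε * |Scx| := mul_le_mul_of_nonneg_left (le_abs_self _) hε0.le
      _ ≤ ε * ((n:ℝ) * S1) := mul_le_mul_of_nonneg_left hlin hε0.le
      _ = (ε * (n:ℝ)) * S1 := by ring
      _ = (π/4) * S1 := by rw [hεn]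
  have h2πε : 2*π/ε = 8 * (n:ℝ) := by
    rw [hε]; field_simp; ring
  have e6 : (n:ℝ) * ((n:ℝ) - 1) * ((2*π/ε)*Sb) ≤ 8 * (n:ℝ)^3 * Sb := by
    rw [h2πε]
    have hcube : (n:ℝ) * ((n:ℝ) - 1) * (n:ℝ) ≤ (n:ℝ)^3 := by nlinarith
    nlinarith [mul_le_mul_of_nonneg_right hcube hSb0]
  have hT2exp : (π - ε) * (2 * Scx) = 2 * π * Scx - 2 * (ε * Scx) := by ring
  rw [hT2exp] at T2
  unfold VRat CRat
  rw [← hScx, ← hSa, ← hSb]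
  linarith [T1, T2, e5, e6]

lemma continuous_VRat {n K L : ℕ} {a : Fin K → ℝ} {b : Fin L → ℝ}
    (ha : ∀ k, 0 < a k) (hb : ∀ l, 0 < b l) : Continuous (VRat n K L a b) := by
  unfold VRat
  refine Continuous.sub (Continuous.add ?_ (continuous_const.mul ?_)) (continuous_const.mul ?_)
  · exact continuous_finset_sum _ fun j _ => continuous_finset_sum _ fun k _ =>
      (continuous_WRat _ (ha k)).comp (continuous_apply j)
  · exact continuous_finset_sum _ fun j _ => continuous_finset_sum _ fun m _ =>
      continuous_finset_sum _ fun l _ =>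
        (continuous_WRat _ (hb l)).comp ((continuous_apply j).sub (continuous_apply m))
  · exact continuous_finset_sum _ fun j _ => continuous_const.mul (continuous_apply j)

lemma ratASys_exists {n K L : ℕ} (hn : 1 ≤ n) (hK : 1 ≤ K) (hL : 1 ≤ L)
    {a : Fin K → ℝ} {b : Fin L → ℝ} (ha : ∀ k, 0 < a k) (hb : ∀ l, 0 < b l) :
    ∃ ξ : Fin n → ℝ, ratASys n K L a b ξ := by
  have hπ := pi_pos
  set V := VRat n K L a b with hV
  set C := CRat n K L a b with hC
  have hC0 : 0 ≤ C := by
    rw [hC]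
    unfold CRat
    have h1 : 0 ≤ ∑ k, a k := Finset.sum_nonneg fun k _ => (ha k).le
    have h2 : 0 ≤ ∑ l, b l := Finset.sum_nonneg fun l _ => (hb l).le
    positivity
  set R : ℝ := (C + |V 0| + 1) * (4/π) with hR
  have hR0 : 0 ≤ R := by
    have : 0 ≤ C + |V 0| + 1 := by positivity
    positivity
  have hnorm : ∀ ξ : Fin n → ℝ, ‖ξ‖ ≤ ∑ j, |ξ j| := by
    intro ξ
    refine (pi_norm_le_iff_of_nonneg (Finset.sum_nonneg fun j _ => abs_nonneg _)).2 fun i => ?_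
    rw [Real.norm_eq_abs]
    exact Finset.single_le_sum (f := fun j => |ξ j|) (fun j _ => abs_nonneg _) (Finset.mem_univ i)
  have hout : ∀ ξ : Fin n → ℝ, R < ‖ξ‖ → V 0 < V ξ := by
    intro ξ hξ
    have h1 := VRat_coercive hn hK hL ha hb ξ
    have h2 : (π/4) * ‖ξ‖ ≤ (π/4) * ∑ j, |ξ j| :=
      mul_le_mul_of_nonneg_left (hnorm ξ) (by positivity)
    have h3 : (π/4) * R < (π/4) * ‖ξ‖ := by
      have : (0:ℝ) < π/4 := by positivity
      exact mul_lt_mul_of_pos_left hξ this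
    have h4 : (π/4) * R = C + |V 0| + 1 := by
      rw [hR]; field_simp
    have h5 : V 0 ≤ |V 0| := le_abs_self _
    rw [← hV, ← hC] at h1
    linarith
  obtain ⟨ξ₀, hmem, hmin⟩ := (isCompact_closedBall (0 : Fin n → ℝ) R).exists_isMinOn
    ⟨0, Metric.mem_closedBall_self hR0⟩ (continuous_VRat ha hb).continuousOn
  have hglob : ∀ x, V ξ₀ ≤ V x := by
    intro x
    by_cases hx : x ∈ Metric.closedBall (0 : Fin n → ℝ) R
    · exact hmin hx
    · have h1 : R < ‖x‖ := by
        rwa [Metric.mem_closedBall, dist_zero_right, not_le] at hx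
      have h2 := hout x h1
      have h3 : V ξ₀ ≤ V 0 := hmin (Metric.mem_closedBall_self hR0)
      linarith
  refine ⟨ξ₀, fun j => ?_⟩
  have hloc : IsLocalMin (fun t => V (Function.update ξ₀ j t)) (ξ₀ j) :=
    Filter.Eventually.of_forall fun t => by
      show V (Function.update ξ₀ j (ξ₀ j)) ≤ V (Function.update ξ₀ j t)
      rw [Function.update_eq_self]
      exact hglob _
  have hzero := hloc.hasDerivAt_eq_zero (hasDerivAt_VRat_update ha hb ξ₀ j (ξ₀ j))
  have := hzero
  linarith [this]


/-- Existence, uniqueness and gap lower bounds for the solution of the rational type A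
Bethe system at `α = 0`. -/
theorem ratA_exists_unique_and_gap_bounds
    (n K L : ℕ) (hn : 1 ≤ n) (hK : 1 ≤ K) (hL : 1 ≤ L)
    (a : Fin K → ℝ) (b : Fin L → ℝ)
    (ha : ∀ k, 0 < a k) (hb : ∀ l, 0 < b l)
    (κ : ℝ)
    (hκ : κ = 2 * (∑ k, (a k)⁻¹) + 2 * (n : ℝ) * (∑ l, (b l)⁻¹)) :
    (∃! ξ : Fin n → ℝ, ratASys n K L a b ξ) ∧
    (∀ ξ : Fin n → ℝ, ratASys n K L a b ξ →
      ∀ j j' : Fin n, j < j' →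
        2 * π * ((j'.val : ℝ) - j.val) / κ ≤ ξ j - ξ j') := by
  constructor
  · obtain ⟨ξ₀, hξ₀⟩ := ratASys_exists (n := n) (K := K) (L := L) hn hK hL ha hb
    refine ⟨ξ₀, hξ₀, fun η hη => ?_⟩
    funext i
    exact le_antisymm (ratASys_le hK ha hb hη hξ₀ i) (ratASys_le hK ha hb hξ₀ hη i)
  · intro ξ hξ j j' hjj'
    exact ratASys_gap hK ha hb hκ hξ hjj'
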